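/- Let A be an n×n real positive semi-definite matrix with non-negative entries. If there exists δ > 0 such that A^{∘α} is positive semi-definite for all α ∈ [0, δ], then A^{∘α} is positive semi-definite for every α ≥ 0 (that is, S_A = [0, ∞)). -/

import Mathlib

/-- The `α`th Hadamard (entrywise) power of a real matrix, using the real power
function `Real.rpow` (so that `0 ^ 0 = 1`). -/
noncomputable def hadamardPower {n : ℕ} (A : Matrix (Fin n) (Fin n) ℝ) (α : ℝ) :
    Matrix (Fin n) (Fin n) ℝ :=
  Matrix.of fun i j => (A i j) ^ α


open Matrix Finset

lemma triple_comm {n : ℕ} (f : Fin n → Fin n → Fin n → ℝ) :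
    ∑ i, ∑ j, ∑ k, f i j k = ∑ k, ∑ i, ∑ j, f i j k := by
  calc ∑ i, ∑ j, ∑ k, f i j k
      = ∑ i, ∑ k, ∑ j, f i j k :=
        Finset.sum_congr rfl fun i _ => Finset.sum_comm
    _ = ∑ k, ∑ i, ∑ j, f i j k := Finset.sum_comm

lemma schur_product {n : ℕ} {A B : Matrix (Fin n) (Fin n) ℝ}
    (hA : A.PosSemidef) (hB : B.PosSemidef) : (A ⊙ B).PosSemidef := by
  obtain ⟨L, hL⟩ : ∃ L : Matrix (Fin n) (Fin n) ℝ, B = Lᴴ * L := by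
    open scoped MatrixOrder in
    obtain ⟨X, hX, -, hXB⟩ :=
      sub_zero B ▸ CFC.exists_sqrt_of_isSelfAdjoint_of_quasispectrumRestricts hB.isHermitian
        (QuasispectrumRestricts.nnreal_of_nonneg (Matrix.nonneg_iff_posSemidef.mpr hB))
    exact ⟨X, by rw [sub_zero] at hXB; rw [← hXB]; nth_rewrite 1 [← hX.star_eq]; rfl⟩
  have hAs : ∀ i j, A j i = A i j := fun i j => by
    conv_lhs => rw [← hA.1]
    simp [conjTranspose_apply]
  have hBs : ∀ i j, B j i = B i j := fun i j => by
    conv_lhs => rw [← hB.1]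
    simp [conjTranspose_apply]
  refine Matrix.PosSemidef.of_dotProduct_mulVec_nonneg ?_ ?_
  · ext i j
    simp only [conjTranspose_apply, hadamard_apply, star_trivial, hAs, hBs]
  · intro x
    have hent : ∀ i j, B i j = ∑ k, L k i * L k j := by
      intro i j
      rw [hL]
      simp [Matrix.mul_apply, conjTranspose_apply]
    have eq1 : dotProduct (star x) ((A ⊙ B) *ᵥ x)
        = ∑ i, ∑ j, ∑ k, (x i * L k i) * A i j * (x j * L k j) := by
      simp only [dotProduct, mulVec, star_trivial, Pi.star_apply, hadamard_apply, hent,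
        Finset.mul_sum, Finset.sum_mul]
      exact Finset.sum_congr rfl fun i _ => Finset.sum_congr rfl fun j _ =>
        Finset.sum_congr rfl fun k _ => by ring
    have eq2 : (∑ k, dotProduct (star (fun i => x i * L k i)) (A *ᵥ (fun i => x i * L k i)))
        = ∑ k, ∑ i, ∑ j, (x i * L k i) * A i j * (x j * L k j) := by
      simp only [dotProduct, mulVec, star_trivial, Pi.star_apply, Finset.mul_sum]
      exact Finset.sum_congr rfl fun k _ => Finset.sum_congr rfl fun i _ =>
        Finset.sum_congr rfl fun j _ => by ring
    have key := eq1.trans ((triple_comm fun i j k => (x i * L k i) * A i j * (x j * L k j)).trans eq2.symm)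
    rw [key]
    exact Finset.sum_nonneg fun k _ => hA.dotProduct_mulVec_nonneg _

/-- For a p.s.d. matrix `A` with non-negative entries: if `A^{∘α}` is p.s.d. for all
`α ∈ [0, δ]` for some `δ > 0`, then `A^{∘α}` is p.s.d. for every `α ≥ 0`. -/
theorem SA_all_of_initial_interval (n : ℕ) (A : Matrix (Fin n) (Fin n) ℝ)
    (hA : A.PosSemidef) (hnn : ∀ i j, 0 ≤ A i j)
    (h : ∃ δ > (0 : ℝ), ∀ α : ℝ, 0 ≤ α → α ≤ δ → (hadamardPower A α).PosSemidef) :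
    ∀ α : ℝ, 0 ≤ α → (hadamardPower A α).PosSemidef := by
  obtain ⟨δ, hδ, hδall⟩ := h
  suffices H : ∀ k : ℕ, ∀ α : ℝ, 0 ≤ α → α ≤ (k + 1) * δ → (hadamardPower A α).PosSemidef by
    intro α hα
    obtain ⟨k, hk⟩ := exists_nat_ge (α / δ)
    refine H k α hα ?_
    have : α ≤ k * δ := by
      rw [div_le_iff₀ hδ] at hk
      linarith
    nlinarith
  intro k
  induction k with
  | zero =>
    intro α h0 h1
    exact hδall α h0 (by push_cast at h1; linarith)
  | succ k ih =>
    intro α h0 h1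
    by_cases hle : α ≤ (k + 1) * δ
    · exact ih α h0 hle
    · push_neg at hle
      have hαδ : 0 ≤ α - δ := by nlinarith
      have hne : (α - δ) + δ ≠ 0 := by
        have : (0:ℝ) < α := by nlinarith
        simpa using this.ne'
      have h2 : hadamardPower A α = hadamardPower A (α - δ) ⊙ hadamardPower A δ := by
        ext i j
        simp only [hadamardPower, of_apply, hadamard_apply]
        rw [← Real.rpow_add' (hnn i j) hne, sub_add_cancel]
      rw [h2]
      refine schur_product (ih (α - δ) hαδ ?_) (hδall δ hδ.le le_rfl)
      push_cast
      push_cast at h1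
      linarith
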